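/- Iteration lemma (abstract decay): let E : ℕ → ℝ≥0, let 0 < θ < 1/2, 0 < β < 2/3, c₁ > 0 with c₁ θ^{1/3 − β/2} ≤ 1, and suppose that whenever E(k) ≤ ε₁ and the running bound a + θ^{−5/3} ∑_{j<k} E(j) ≤ M holds one has E(k+1) ≤ c₁ θ^{2/3} E(k). If E(0) ≤ ε₂ := (1 − θ^{1/3−β/2}) min{ ε₁/2, θ^{5/3}(1−θ^β) M/2 } and a ≤ M/2, then for all k ≥ 0: (i) a + θ^{−5/3} ∑_{j<k} E(j) ≤ M, (ii) E(k) ≤ ε₁, and (iii) E(k+1) ≤ θ^{(k+1)β} (1 − θ^{1/3−β/2})^{−1} E(0). -/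

import Mathlib

/-- Abstract iteration/decay lemma (numerical content of the iteration lemma of Section 3).
`E k` stands for `E(x,t,θᵏr)` and `a` for `|u_{Q_r}| + |F_{Q_r}|`. -/
theorem stmt8 (E : ℕ → ℝ) (hE : ∀ k, 0 ≤ E k)
    (θ β c₁ ε₁ a M : ℝ)
    (hθ : 0 < θ) (hθ' : θ < 1 / 2) (hβ : 0 < β) (hβ' : β < 2 / 3)
    (hc₁ : 0 < c₁) (hsmall : c₁ * θ ^ ((1 : ℝ) / 3 - β / 2) ≤ 1)
    (hε₁ : 0 < ε₁) (hM : 0 < M) (ha0 : 0 ≤ a) (ha : a ≤ M / 2)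
    (hdecay : ∀ k, E k ≤ ε₁ →
      a + θ ^ (-(5 : ℝ) / 3) * ∑ j ∈ Finset.range k, E j ≤ M →
      E (k + 1) ≤ c₁ * θ ^ ((2 : ℝ) / 3) * E k)
    (hE0 : E 0 ≤ (1 - θ ^ ((1 : ℝ) / 3 - β / 2)) *
      min (ε₁ / 2) (θ ^ ((5 : ℝ) / 3) * (1 - θ ^ β) * (M / 2))) :
    ∀ k : ℕ,
      (a + θ ^ (-(5 : ℝ) / 3) * ∑ j ∈ Finset.range k, E j ≤ M) ∧
      E k ≤ ε₁ ∧
      E (k + 1) ≤ θ ^ (((k : ℝ) + 1) * β) * (1 - θ ^ ((1 : ℝ) / 3 - β / 2))⁻¹ * E 0 := by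
  have hθ1 : θ < 1 := by linarith
  set t := θ ^ ((1:ℝ)/3 - β/2) with ht_def
  have ht0 : 0 < t := Real.rpow_pos_of_pos hθ _
  have ht1 : t < 1 := Real.rpow_lt_one hθ.le hθ1 (by linarith)
  set r := θ ^ β with hr_def
  have hr0 : 0 < r := Real.rpow_pos_of_pos hθ _
  have hr1 : r < 1 := Real.rpow_lt_one hθ.le hθ1 hβ
  -- q ≤ r
  have hq : c₁ * θ ^ ((2:ℝ)/3) ≤ r := by
    have hsplit : θ ^ ((2:ℝ)/3) = t * θ ^ ((1:ℝ)/3 + β/2) := by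
      rw [ht_def, ← Real.rpow_add hθ]; ring_nf
    have h1 : θ ^ ((1:ℝ)/3 + β/2) ≤ r := by
      rw [hr_def]
      exact Real.rpow_le_rpow_of_exponent_ge hθ hθ1.le (by linarith)
    have h2 : c₁ * θ ^ ((2:ℝ)/3) = (c₁ * t) * θ ^ ((1:ℝ)/3 + β/2) := by
      rw [hsplit]; ring
    rw [h2]
    calc (c₁ * t) * θ ^ ((1:ℝ)/3 + β/2) ≤ 1 * θ ^ ((1:ℝ)/3 + β/2) := by
          apply mul_le_mul_of_nonneg_right hsmall (Real.rpow_pos_of_pos hθ _).le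
      _ ≤ r := by rw [one_mul]; exact h1
  have hE0e : E 0 ≤ ε₁ / 2 := by
    calc E 0 ≤ (1 - t) * min (ε₁ / 2) (θ ^ ((5:ℝ)/3) * (1 - r) * (M / 2)) := hE0
      _ ≤ 1 * (ε₁ / 2) :=
          mul_le_mul (by linarith) (min_le_left _ _)
            (le_min (by linarith) (mul_nonneg (mul_nonneg (Real.rpow_pos_of_pos hθ _).le (by linarith)) (by linarith))) one_pos.le
      _ = ε₁ / 2 := one_mul _
  have hE0M : E 0 ≤ θ ^ ((5:ℝ)/3) * (1 - r) * (M / 2) := by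
    calc E 0 ≤ (1 - t) * min (ε₁ / 2) (θ ^ ((5:ℝ)/3) * (1 - r) * (M / 2)) := hE0
      _ ≤ 1 * (θ ^ ((5:ℝ)/3) * (1 - r) * (M / 2)) :=
          mul_le_mul (by linarith) (min_le_right _ _)
            (le_min (by linarith) (mul_nonneg (mul_nonneg (Real.rpow_pos_of_pos hθ _).le (by linarith)) (by linarith))) one_pos.le
      _ = _ := one_mul _
  clear_value t r
  -- geometric sum bound
  have geom : ∀ n : ℕ, ∑ j ∈ Finset.range n, r ^ j ≤ (1 - r)⁻¹ := by
    intro n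
    rw [geom_sum_eq hr1.ne n, div_le_iff_of_neg (by linarith : r - 1 < 0)]
    have hm : (1 - r)⁻¹ * (r - 1) = -1 := by
      rw [mul_comm, ← div_eq_mul_inv, div_eq_iff (by linarith : (1:ℝ) - r ≠ 0)]
      ring
    rw [hm]
    nlinarith [pow_nonneg hr0.le n]
  -- sum bound from pointwise bounds
  have sumbd : ∀ k : ℕ, (∀ j < k, E j ≤ r ^ j * E 0) →
      a + θ ^ (-(5:ℝ)/3) * ∑ j ∈ Finset.range k, E j ≤ M := by
    intro k h
    have hsum : ∑ j ∈ Finset.range k, E j ≤ (1 - r)⁻¹ * E 0 := by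
      calc ∑ j ∈ Finset.range k, E j ≤ ∑ j ∈ Finset.range k, r ^ j * E 0 :=
            Finset.sum_le_sum fun j hj => h j (Finset.mem_range.mp hj)
        _ = (∑ j ∈ Finset.range k, r ^ j) * E 0 := by rw [Finset.sum_mul]
        _ ≤ (1 - r)⁻¹ * E 0 := mul_le_mul_of_nonneg_right (geom k) (hE 0)
    have hθ5 : θ ^ (-(5:ℝ)/3) * θ ^ ((5:ℝ)/3) = 1 := by
      rw [← Real.rpow_add hθ]; norm_num
    have hpos : (0:ℝ) < θ ^ (-(5:ℝ)/3) := Real.rpow_pos_of_pos hθ _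
    have : θ ^ (-(5:ℝ)/3) * ∑ j ∈ Finset.range k, E j ≤ M / 2 := by
      calc θ ^ (-(5:ℝ)/3) * ∑ j ∈ Finset.range k, E j
          ≤ θ ^ (-(5:ℝ)/3) * ((1 - r)⁻¹ * E 0) :=
            mul_le_mul_of_nonneg_left hsum hpos.le
        _ ≤ θ ^ (-(5:ℝ)/3) * ((1 - r)⁻¹ * (θ ^ ((5:ℝ)/3) * (1 - r) * (M / 2))) := by
            apply mul_le_mul_of_nonneg_left _ hpos.le
            exact mul_le_mul_of_nonneg_left hE0M (inv_nonneg.mpr (by linarith))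
        _ = (θ ^ (-(5:ℝ)/3) * θ ^ ((5:ℝ)/3)) * ((1 - r)⁻¹ * (1 - r)) * (M / 2) := by ring
        _ = M / 2 := by rw [hθ5, inv_mul_cancel₀ (by linarith)]; ring
    linarith
  -- main induction
  have key : ∀ k, ∀ j ≤ k, E j ≤ r ^ j * E 0 := by
    intro k
    induction k with
    | zero => intro j hj; interval_cases j; simp
    | succ n ih =>
      intro j hj
      rcases Nat.le_succ_iff.mp hj with h | h
      · exact ih j h
      · subst h
        have hEn : E n ≤ ε₁ := by
          have := ih n le_rfl
          have hle : r ^ n * E 0 ≤ E 0 := by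
            nlinarith [pow_le_one₀ hr0.le hr1.le (n := n), hE 0]
          linarith
        have hsum := sumbd n (fun i hi => ih i hi.le)
        calc E (n + 1) ≤ c₁ * θ ^ ((2:ℝ)/3) * E n := hdecay n hEn hsum
          _ ≤ r * (r ^ n * E 0) := by
              have := ih n le_rfl
              nlinarith [hE n, mul_pos hc₁ (Real.rpow_pos_of_pos hθ ((2:ℝ)/3))]
          _ = r ^ (n + 1) * E 0 := by ring
  intro k
  have hEk : E k ≤ r ^ k * E 0 := key k k le_rfl
  have hrk1 : r ^ k ≤ 1 := pow_le_one₀ hr0.le hr1.le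
  refine ⟨sumbd k (fun j hj => key k j hj.le), ?_, ?_⟩
  · calc E k ≤ r ^ k * E 0 := hEk
      _ ≤ 1 * E 0 := mul_le_mul_of_nonneg_right hrk1 (hE 0)
      _ = E 0 := one_mul _
      _ ≤ ε₁ := by linarith
  · have h1 : E (k + 1) ≤ r ^ (k + 1) * E 0 := key (k+1) (k+1) le_rfl
    have h2 : (r : ℝ) ^ (k + 1) = θ ^ (((k:ℝ) + 1) * β) := by
      rw [hr_def, ← Real.rpow_natCast (θ ^ β) (k+1), ← Real.rpow_mul hθ.le]
      push_cast; ring_nf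
    have h3 : (1:ℝ) ≤ (1 - t)⁻¹ := (one_le_inv₀ (by linarith)).mpr (by linarith)
    have hθk : (0:ℝ) ≤ θ ^ (((k:ℝ) + 1) * β) := (Real.rpow_pos_of_pos hθ _).le
    calc E (k + 1) ≤ r ^ (k + 1) * E 0 := h1
      _ = θ ^ (((k:ℝ) + 1) * β) * E 0 := by rw [h2]
      _ ≤ θ ^ (((k:ℝ) + 1) * β) * ((1 - t)⁻¹ * E 0) := by
          apply mul_le_mul_of_nonneg_left _ hθk
          calc E 0 = 1 * E 0 := (one_mul _).symm
            _ ≤ (1 - t)⁻¹ * E 0 := mul_le_mul_of_nonneg_right h3 (hE 0)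
      _ = θ ^ (((k:ℝ) + 1) * β) * (1 - t)⁻¹ * E 0 := by ring
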